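/- Let x ∈ ℝⁿ, I ⊆ {1,...,m} nonempty, with θᴵ(x) < 0, and let γ ∈ (0,1). Then there exists ᾱ > 0 such that for all α ∈ (0, ᾱ], fⱼ(x + α vᴵ(x)) ≤ fⱼ(x) + γ α θᴵ(x) for all j ∈ I (the Armijo-type sufficient decrease condition holds for small enough steps). -/

import Mathlib

open RealInnerProductSpace

/-- Armijo-type sufficient decrease holds for all small enough steps along vᴵ(x)
when θᴵ(x) < 0 (Fliege–Svaiter Lemma 4). -/
theorem armijo_sufficient_decrease
    {n m : ℕ}
    (f : Fin m → EuclideanSpace ℝ (Fin n) → ℝ)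
    (hf : ∀ j, ContDiff ℝ 1 (f j))
    (x : EuclideanSpace ℝ (Fin n))
    (g : Fin m → EuclideanSpace ℝ (Fin n))
    (hg : ∀ j, HasGradientAt (f j) (g j) x)
    (I : Finset (Fin m)) (hI : I.Nonempty)
    (v : EuclideanSpace ℝ (Fin n)) (θ : ℝ)
    (hθ : θ = I.sup' hI (fun j => ⟪g j, v⟫) + (1 / 2) * ‖v‖ ^ 2)
    (hmin : ∀ d : EuclideanSpace ℝ (Fin n),
      θ ≤ I.sup' hI (fun j => ⟪g j, d⟫) + (1 / 2) * ‖d‖ ^ 2)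
    (hneg : θ < 0)
    (γ : ℝ) (hγ : γ ∈ Set.Ioo (0 : ℝ) 1) :
    ∃ αbar > (0 : ℝ), ∀ α ∈ Set.Ioc (0 : ℝ) αbar, ∀ j ∈ I,
      f j (x + α • v) ≤ f j x + γ * α * θ := by
  obtain ⟨hγ0, hγ1⟩ := hγ
  set ε := (γ - 1) * θ with hε
  have hεpos : 0 < ε := mul_pos_of_neg_of_neg (by linarith) hneg
  -- each ⟪g j, v⟫ ≤ θ for j ∈ I
  have hdle : ∀ j ∈ I, ⟪g j, v⟫ ≤ θ := by
    intro j hj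
    have h1 : ⟪g j, v⟫ ≤ I.sup' hI (fun j => ⟪g j, v⟫) :=
      Finset.le_sup' (fun j => ⟪g j, v⟫) hj
    have h2 : (0:ℝ) ≤ (1 / 2) * ‖v‖ ^ 2 := by positivity
    rw [hθ]; linarith
  have hderiv : ∀ j ∈ I, HasDerivAt (fun α : ℝ => f j (x + α • v)) ⟪g j, v⟫ 0 := by
    intro j _
    have h1 : HasDerivAt (fun α : ℝ => x + α • v) v 0 := by
      simpa using ((hasDerivAt_id (0:ℝ)).smul_const v).const_add x
    have h2 : HasFDerivAt (f j)
        (InnerProductSpace.toDual ℝ (EuclideanSpace ℝ (Fin n)) (g j))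
        ((fun α : ℝ => x + α • v) 0) := by
      simpa using (hg j).hasFDerivAt
    have := h2.comp_hasDerivAt 0 h1
    simp at this; exact this
  have hev : ∀ᶠ α in nhds (0:ℝ), ∀ j ∈ I,
      ‖f j (x + α • v) - f j x - α * ⟪g j, v⟫‖ ≤ ε * ‖α‖ := by
    rw [Filter.eventually_all_finset]
    intro j hj
    have hlo := (hasDerivAt_iff_isLittleO.mp (hderiv j hj)).def hεpos
    simpa [smul_eq_mul] using hlo
  obtain ⟨δ, hδpos, hδ⟩ := Metric.eventually_nhds_iff.mp hev
  refine ⟨δ / 2, by linarith, ?_⟩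
  rintro α ⟨hα0, hαδ⟩ j hj
  have hdist : dist α 0 < δ := by
    rw [Real.dist_eq, sub_zero, abs_of_pos hα0]; linarith
  have hb := hδ hdist j hj
  rw [Real.norm_eq_abs, Real.norm_eq_abs, abs_of_pos hα0] at hb
  have hb' : f j (x + α • v) - f j x - α * ⟪g j, v⟫ ≤ ε * α :=
    (abs_le.mp hb).2
  have hmul : α * ⟪g j, v⟫ ≤ α * θ :=
    mul_le_mul_of_nonneg_left (hdle j hj) (le_of_lt hα0)
  have : ε * α = (γ - 1) * θ * α := by rw [hε]
  nlinarith [hb', hmul]
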